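/- Let $\bar{A}_n$, $\bar{B}_n$ be matrices defining a closed-loop linear time-varying system $\bar{x}_{n+1} = \bar{A}_n \bar{x}_n + \bar{B}_n e_n + \text{noise}$, where the watermark vectors $e_n$ are mutually independent, zero-mean, with block-diagonal covariance whose $i$-th block $\Sigma_{e_i}$ is positive definite, and $e_n$ is independent of the state history up to time $n$ and of all noise. Fix indices $i,j$ and a delay $\rho \in \mathbb{N}$. If the matrix product $[W C_j \; 0] \bar{A}_{n-1} \cdots \bar{A}_{n-\rho} \bar{B}_{n-\rho-1} E_i^T$ is nonzero, where $E_i$ selects the block of $e$ corresponding to agent $i$, then the cross-correlation $\mathbb{E}[W C_j x_n e_{i,n-\rho-1}^T]$ equals this matrix product times $\Sigma_{e_i}$ and is hence nonzero. -/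

import Mathlib

open MeasureTheory ProbabilityTheory Matrix

/-- The state transition matrix `transMat A k n = A (n-1) * ⋯ * A k` (and `1` if `n ≤ k`). -/
def transMat {ι : Type*} [Fintype ι] [DecidableEq ι]
    (A : ℕ → Matrix ι ι ℝ) (k : ℕ) : ℕ → Matrix ι ι ℝ
  | 0 => 1
  | n + 1 => if k ≤ n then A n * transMat A k n else 1

/-- Networked LTV dynamic watermarking correlation proposition: for the closed-loop system
`x̄ (n+1) = Ā n x̄ n + B̄ n e n + ν n` driven by mutually independent zero-mean watermarks
(independent of the state history and of all noise, with block-diagonal covariance whose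
`i`-th block `Σ_{e_i}` is positive definite), if
`[W C_j  0] Ā_{n-1} ⋯ Ā_{n-ρ} B̄_{n-ρ-1} Eᵢᵀ ≠ 0`, then
`𝔼[W C_j x_n e_{i,n-ρ-1}ᵀ]` equals this product times `Σ_{e_i}` and is hence nonzero. -/
theorem stmt_0 {Ω : Type*} [MeasurableSpace Ω] (μ : Measure Ω) [IsProbabilityMeasure μ]
    {p t q qi m r : ℕ}
    (Abar : ℕ → Matrix (Fin p ⊕ Fin t) (Fin p ⊕ Fin t) ℝ)
    (Bbar : ℕ → Matrix (Fin p ⊕ Fin t) (Fin q) ℝ)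
    (x : ℕ → Ω → (Fin p ⊕ Fin t) → ℝ) (e : ℕ → Ω → Fin q → ℝ)
    (ν : ℕ → Ω → (Fin p ⊕ Fin t) → ℝ)
    (hrec : ∀ n ω, x (n + 1) ω =
      (Abar n).mulVec (x n ω) + (Bbar n).mulVec (e n ω) + ν n ω)
    (x0 : (Fin p ⊕ Fin t) → ℝ) (hx0 : ∀ ω, x 0 ω = x0)
    (hmease : ∀ n, Measurable (e n)) (hmeasν : ∀ n, Measurable (ν n))
    (hmeasx : ∀ n, Measurable (x n))
    (hemean : ∀ n a, ∫ ω, e n ω a ∂μ = 0) (hνmean : ∀ n a, ∫ ω, ν n ω a ∂μ = 0)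
    (heL2 : ∀ n a, MemLp (fun ω => e n ω a) 2 μ)
    (hνL2 : ∀ n a, MemLp (fun ω => ν n ω a) 2 μ)
    (hiid : iIndepFun e μ)
    (hindepν : ∀ n k, IndepFun (e n) (ν k) μ)
    (hindepx : ∀ n, IndepFun (e n) (x n) μ)
    (Se : Matrix (Fin q) (Fin q) ℝ)
    (hSe : ∀ n, (Matrix.of fun a b => ∫ ω, e n ω a * e n ω b ∂μ) = Se)
    (Sei : Matrix (Fin qi) (Fin qi) ℝ) (hSei : Sei.PosDef)
    (Ei : Matrix (Fin qi) (Fin q) ℝ) (hblock : Se * Eiᵀ = Eiᵀ * Sei)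
    (W : Matrix (Fin r) (Fin m) ℝ) (Cj : Matrix (Fin m) (Fin p) ℝ)
    (n ρ : ℕ) (hn : ρ + 1 ≤ n)
    (hnz : Matrix.fromCols (W * Cj) (0 : Matrix (Fin r) (Fin t) ℝ) *
      transMat Abar (n - ρ) n * Bbar (n - ρ - 1) * Eiᵀ ≠ 0) :
    (Matrix.of fun a b => ∫ ω,
        ((Matrix.fromCols (W * Cj) (0 : Matrix (Fin r) (Fin t) ℝ)).mulVec (x n ω)) a *
          (Ei.mulVec (e (n - ρ - 1) ω)) b ∂μ) =
      Matrix.fromCols (W * Cj) (0 : Matrix (Fin r) (Fin t) ℝ) *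
        transMat Abar (n - ρ) n * Bbar (n - ρ - 1) * Eiᵀ * Sei ∧
    (Matrix.of fun a b => ∫ ω,
        ((Matrix.fromCols (W * Cj) (0 : Matrix (Fin r) (Fin t) ℝ)).mulVec (x n ω)) a *
          (Ei.mulVec (e (n - ρ - 1) ω)) b ∂μ) ≠ 0 := by
  classical
  set F := Matrix.fromCols (W * Cj) (0 : Matrix (Fin r) (Fin t) ℝ) with hF
  set k := n - ρ - 1 with hkdef
  -- products of L2 functions are integrable
  have hL2mul : ∀ {f g : Ω → ℝ}, MemLp f 2 μ → MemLp g 2 μ →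
      Integrable (fun ω => f ω * g ω) μ := by
    intro f g hf hg
    have h := hg.smul (φ := f) (r := 1) hf
    exact memLp_one_iff_integrable.mp h
  -- components of x are L2
  have hxL2 : ∀ N a, MemLp (fun ω => x N ω a) 2 μ := by
    intro N
    induction N with
    | zero => intro a; simp only [hx0]; exact memLp_const _
    | succ N ih =>
      intro a
      have hfun : (fun ω => x (N + 1) ω a) = fun ω =>
          (∑ c, Abar N a c * x N ω c) + ((∑ c, Bbar N a c * e N ω c) + ν N ω a) := by
        funext ω
        simp [hrec, Matrix.mulVec, dotProduct, add_assoc]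
      rw [hfun]
      exact (memLp_finset_sum _ fun c _ => (ih c).const_mul _).add
        ((memLp_finset_sum _ fun c _ => (heL2 N c).const_mul _).add (hνL2 N a))
  -- vanishing cross-correlations
  have hzx : ∀ c b, ∫ ω, x k ω c * e k ω b ∂μ = 0 := by
    intro c b
    have hind : IndepFun (fun ω => x k ω c) (fun ω => e k ω b) μ :=
      (hindepx k).symm.comp (measurable_pi_apply c) (measurable_pi_apply b)
    calc ∫ ω, x k ω c * e k ω b ∂μ
        = (∫ ω, x k ω c ∂μ) * ∫ ω, e k ω b ∂μ :=
          hind.integral_fun_mul_eq_mul_integral ((hxL2 k c).integrable one_le_two).aestronglyMeasurable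
            ((heL2 k b).integrable one_le_two).aestronglyMeasurable
      _ = 0 := by rw [hemean]; ring
  have hzν : ∀ N a b, ∫ ω, ν N ω a * e k ω b ∂μ = 0 := by
    intro N a b
    have hind : IndepFun (fun ω => ν N ω a) (fun ω => e k ω b) μ :=
      (hindepν k N).symm.comp (measurable_pi_apply a) (measurable_pi_apply b)
    calc ∫ ω, ν N ω a * e k ω b ∂μ
        = (∫ ω, ν N ω a ∂μ) * ∫ ω, e k ω b ∂μ :=
          hind.integral_fun_mul_eq_mul_integral ((hνL2 N a).integrable one_le_two).aestronglyMeasurable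
            ((heL2 k b).integrable one_le_two).aestronglyMeasurable
      _ = 0 := by rw [hemean]; ring
  have hze : ∀ N c b, N ≠ k → ∫ ω, e N ω c * e k ω b ∂μ = 0 := by
    intro N c b hNk
    have hind : IndepFun (fun ω => e N ω c) (fun ω => e k ω b) μ :=
      (hiid.indepFun hNk).comp (measurable_pi_apply c) (measurable_pi_apply b)
    calc ∫ ω, e N ω c * e k ω b ∂μ
        = (∫ ω, e N ω c ∂μ) * ∫ ω, e k ω b ∂μ :=
          hind.integral_fun_mul_eq_mul_integral ((heL2 N c).integrable one_le_two).aestronglyMeasurable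
            ((heL2 k b).integrable one_le_two).aestronglyMeasurable
      _ = 0 := by rw [hemean]; ring
  have hSee : ∀ a b, ∫ ω, e k ω a * e k ω b ∂μ = Se a b := fun a b =>
    congrFun (congrFun (hSe k) a) b
  -- one-step expansion
  have hexp : ∀ N a b, ∫ ω, x (N + 1) ω a * e k ω b ∂μ =
      (∑ c, Abar N a c * ∫ ω, x N ω c * e k ω b ∂μ)
      + (∑ c, Bbar N a c * ∫ ω, e N ω c * e k ω b ∂μ)
      + ∫ ω, ν N ω a * e k ω b ∂μ := by
    intro N a b
    have iA : ∀ c, Integrable (fun ω => Abar N a c * (x N ω c * e k ω b)) μ :=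
      fun c => (hL2mul (hxL2 N c) (heL2 k b)).const_mul _
    have iB : ∀ c, Integrable (fun ω => Bbar N a c * (e N ω c * e k ω b)) μ :=
      fun c => (hL2mul (heL2 N c) (heL2 k b)).const_mul _
    have iV : Integrable (fun ω => ν N ω a * e k ω b) μ :=
      hL2mul (hνL2 N a) (heL2 k b)
    have h1 : ∀ ω, x (N + 1) ω a * e k ω b =
        (∑ c, Abar N a c * (x N ω c * e k ω b))
        + ((∑ c, Bbar N a c * (e N ω c * e k ω b)) + ν N ω a * e k ω b) := by
      intro ω
      simp only [hrec, Pi.add_apply, Matrix.mulVec, dotProduct]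
      rw [add_mul, add_mul, Finset.sum_mul, Finset.sum_mul]
      simp_rw [mul_assoc]
      ring
    calc ∫ ω, x (N + 1) ω a * e k ω b ∂μ
        = ∫ ω, ((∑ c, Abar N a c * (x N ω c * e k ω b))
            + ((∑ c, Bbar N a c * (e N ω c * e k ω b)) + ν N ω a * e k ω b)) ∂μ := by
          congr 1; funext ω; exact h1 ω
      _ = (∫ ω, ∑ c, Abar N a c * (x N ω c * e k ω b) ∂μ)
            + ((∫ ω, ∑ c, Bbar N a c * (e N ω c * e k ω b) ∂μ)
            + ∫ ω, ν N ω a * e k ω b ∂μ) :=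
          (integral_add (integrable_finset_sum _ fun c _ => iA c)
            ((integrable_finset_sum _ fun c _ => iB c).add iV)).trans
            (congrArg (fun z => (∫ ω, ∑ c, Abar N a c * (x N ω c * e k ω b) ∂μ) + z)
              (integral_add (integrable_finset_sum _ fun c _ => iB c) iV))
      _ = (∑ c, ∫ ω, Abar N a c * (x N ω c * e k ω b) ∂μ)
            + ((∑ c, ∫ ω, Bbar N a c * (e N ω c * e k ω b) ∂μ)
            + ∫ ω, ν N ω a * e k ω b ∂μ) :=
          congrArg₂ (· + ·) (integral_finset_sum _ fun c _ => iA c)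
            (congrArg₂ (· + ·) (integral_finset_sum _ fun c _ => iB c) rfl)
      _ = (∑ c, Abar N a c * ∫ ω, x N ω c * e k ω b ∂μ)
            + ((∑ c, Bbar N a c * ∫ ω, e N ω c * e k ω b ∂μ)
            + ∫ ω, ν N ω a * e k ω b ∂μ) :=
          congrArg₂ (· + ·) (Finset.sum_congr rfl fun c _ => integral_const_mul _ _)
            (congrArg₂ (· + ·) (Finset.sum_congr rfl fun c _ => integral_const_mul _ _) rfl)
      _ = _ := (add_assoc _ _ _).symm
  -- the main correlation computation, by induction
  have main : ∀ d, (Matrix.of fun a b => ∫ ω, x (k + 1 + d) ω a * e k ω b ∂μ)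
      = transMat Abar (k + 1) (k + 1 + d) * (Bbar k * Se) := by
    intro d
    induction d with
    | zero =>
      ext a b
      have ht : transMat Abar (k + 1) (k + 1) = 1 := by
        show (if k + 1 ≤ k then _ else 1) = 1
        simp
      rw [ht, Matrix.one_mul]
      show (∫ ω, x (k + 1) ω a * e k ω b ∂μ) = (Bbar k * Se) a b
      rw [hexp k a b]
      simp only [hzx, mul_zero, Finset.sum_const_zero, hzν, add_zero, zero_add]
      simp_rw [hSee]
      rw [Matrix.mul_apply]
    | succ d ih =>
      ext a b
      show (∫ ω, x (k + 1 + d + 1) ω a * e k ω b ∂μ)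
        = (transMat Abar (k + 1) (k + 1 + d + 1) * (Bbar k * Se)) a b
      rw [hexp (k + 1 + d) a b]
      have hne : ∀ c, ∫ ω, e (k + 1 + d) ω c * e k ω b ∂μ = 0 :=
        fun c => hze _ c b (by omega)
      simp only [hne, mul_zero, Finset.sum_const_zero, hzν, add_zero]
      have ht : transMat Abar (k + 1) (k + 1 + d + 1)
          = Abar (k + 1 + d) * transMat Abar (k + 1) (k + 1 + d) := by
        show (if k + 1 ≤ k + 1 + d then _ else _) = _
        rw [if_pos (by omega)]
      rw [ht, Matrix.mul_assoc, Matrix.mul_apply]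
      refine Finset.sum_congr rfl fun c _ => ?_
      exact congrArg (fun z => Abar (k + 1 + d) a c * z) (congrFun (congrFun ih c) b)
  have hk1 : k + 1 = n - ρ := by omega
  have hnk : n = k + 1 + ρ := by omega
  have hm := main ρ
  rw [← hnk, hk1] at hm
  -- rewrite the target matrix as F * M * Eiᵀ
  have hT : (Matrix.of fun a b => ∫ ω,
        (F.mulVec (x n ω)) a * (Ei.mulVec (e k ω)) b ∂μ)
      = F * (Matrix.of fun a b => ∫ ω, x n ω a * e k ω b ∂μ) * Eiᵀ := by
    ext a b
    show (∫ ω, (F.mulVec (x n ω)) a * (Ei.mulVec (e k ω)) b ∂μ) = _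
    have hpt : ∀ ω, (F.mulVec (x n ω)) a * (Ei.mulVec (e k ω)) b
        = ∑ c, ∑ d, F a c * Ei b d * (x n ω c * e k ω d) := by
      intro ω
      simp only [Matrix.mulVec, dotProduct]
      rw [Finset.sum_mul]
      refine Finset.sum_congr rfl fun c _ => ?_
      rw [Finset.mul_sum]
      refine Finset.sum_congr rfl fun d _ => ?_
      ring
    simp only [hpt]
    have step : ∀ c, ∫ ω, ∑ d, F a c * Ei b d * (x n ω c * e k ω d) ∂μ
        = ∑ d, F a c * Ei b d * ∫ ω, x n ω c * e k ω d ∂μ := by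
      intro c
      have h3 : ∫ ω, ∑ d, F a c * Ei b d * (x n ω c * e k ω d) ∂μ
          = ∑ d, ∫ ω, F a c * Ei b d * (x n ω c * e k ω d) ∂μ :=
        integral_finset_sum _ fun d _ => (hL2mul (hxL2 n c) (heL2 k d)).const_mul _
      rw [h3]
      exact Finset.sum_congr rfl fun d _ => integral_const_mul _ _
    have split : ∫ ω, ∑ c, ∑ d, F a c * Ei b d * (x n ω c * e k ω d) ∂μ
        = ∑ c, ∫ ω, ∑ d, F a c * Ei b d * (x n ω c * e k ω d) ∂μ :=
      integral_finset_sum _ fun c _ =>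
        integrable_finset_sum _ fun d _ => (hL2mul (hxL2 n c) (heL2 k d)).const_mul _
    rw [split]
    simp_rw [step]
    rw [Matrix.mul_apply]
    simp_rw [Matrix.mul_apply, Matrix.transpose_apply, Finset.sum_mul]
    rw [Finset.sum_comm]
    refine Finset.sum_congr rfl fun c _ => Finset.sum_congr rfl fun d _ => ?_
    simp only [Matrix.of_apply]
    ring
  have hEq : (Matrix.of fun a b => ∫ ω,
        (F.mulVec (x n ω)) a * (Ei.mulVec (e k ω)) b ∂μ)
      = F * transMat Abar (n - ρ) n * Bbar k * Eiᵀ * Sei := by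
    rw [hT, hm]
    calc F * (transMat Abar (n - ρ) n * (Bbar k * Se)) * Eiᵀ
        = F * transMat Abar (n - ρ) n * Bbar k * (Se * Eiᵀ) := by
          simp only [Matrix.mul_assoc]
      _ = F * transMat Abar (n - ρ) n * Bbar k * (Eiᵀ * Sei) := by rw [hblock]
      _ = F * transMat Abar (n - ρ) n * Bbar k * Eiᵀ * Sei := by
          simp only [Matrix.mul_assoc]
  refine ⟨hEq, ?_⟩
  rw [hEq]
  intro h0
  apply hnz
  have hinv : Invertible Sei :=
    Sei.invertibleOfIsUnitDet (isUnit_iff_ne_zero.mpr (ne_of_gt hSei.det_pos))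
  calc F * transMat Abar (n - ρ) n * Bbar k * Eiᵀ
      = F * transMat Abar (n - ρ) n * Bbar k * Eiᵀ * Sei * ⅟Sei := by
        rw [Matrix.mul_assoc _ Sei, mul_invOf_self, Matrix.mul_one]
    _ = 0 := by rw [h0, Matrix.zero_mul]
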